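/- Let n divide q - 1 and let C be a cyclic code of length n over F_q with complete defining set Z, a subset of the group R_n of n-th roots of unity in F_q. Suppose Z contains a coset of a subgroup of R_n of order ℓ (where ℓ divides n), and R_n \ Z contains a set of the form {β^i, β^{i+1}, ..., β^{i + n/ℓ - 2}} for some primitive n-th root of unity β (a consecutive set of length n/ℓ - 1). Then the minimum Hamming distance of the dual code of C is exactly n/ℓ. -/
import Mathlib


noncomputable section

open Polynomial
open scoped Pointwise

/-- The cyclic code of length `n` over `K` whose complete defining set is `Z ⊆ L`,
where `L` is an extension of `K` containing the `n`-th roots of unity: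
codewords are those `c` whose associated polynomial vanishes on `Z`. -/
def cyclicCodeOn (K L : Type) [Field K] [Field L] [Algebra K L]
    (n : ℕ) (Z : Set L) : Submodule K (Fin n → K) where
  carrier := {c | ∀ β ∈ Z, ∑ i : Fin n, algebraMap K L (c i) * β ^ (i : ℕ) = 0}
  add_mem' := by
    intro a b ha hb β hβ
    simp only [Pi.add_apply, map_add, add_mul, Finset.sum_add_distrib]
    rw [ha β hβ, hb β hβ, add_zero]
  zero_mem' := by intro β hβ; simp
  smul_mem' := by
    intro r a ha β hβ
    simp only [Pi.smul_apply, smul_eq_mul, map_mul, mul_assoc, ← Finset.mul_sum]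
    rw [ha β hβ, mul_zero]

/-- Cyclic code of length `n` over `F` with complete defining set `Z ⊆ F`. -/
abbrev cyclicCode (F : Type) [Field F] (n : ℕ) (Z : Set F) : Submodule F (Fin n → F) :=
  cyclicCodeOn F F n Z

/-- The dual code of a code `C ⊆ F^n` (under the standard inner product). -/
def dualSet (F : Type) [Field F] (n : ℕ) (C : Set (Fin n → F)) : Set (Fin n → F) :=
  {v | ∀ c ∈ C, ∑ i : Fin n, v i * c i = 0}

open Classical in
/-- Hamming weight of a vector. -/
def wt {F : Type} [Zero F] {n : ℕ} (c : Fin n → F) : ℕ :=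
  (Finset.univ.filter (fun i => c i ≠ 0)).card

/-- `d` is the minimum Hamming distance (= minimum nonzero weight) of the code `C`. -/
def IsMinDist {F : Type} [Zero F] {n : ℕ} (C : Set (Fin n → F)) (d : ℕ) : Prop :=
  (∃ c ∈ C, c ≠ 0 ∧ wt c = d) ∧ ∀ c ∈ C, c ≠ 0 → d ≤ wt c

open Classical in
/-- `C` has `(r, δ)`-locality: every coordinate lies in a recovery set `S` of size
at most `r + δ - 1` such that the punctured code `C|_S` has minimum distance `≥ δ`. -/
def HasLocality {F : Type} [Zero F] {n : ℕ} (C : Set (Fin n → F)) (r δ : ℕ) : Prop :=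
  ∀ i : Fin n, ∃ S : Finset (Fin n), i ∈ S ∧ S.card ≤ r + δ - 1 ∧
    ∀ c ∈ C, ∀ c' ∈ C, (∃ j ∈ S, c j ≠ c' j) →
      δ ≤ (S.filter (fun j => c j ≠ c' j)).card

/-- The polynomial `c₀ + c₁ x + ⋯ + c_{n-1} x^{n-1}` associated to a vector. -/
def vecPoly {F : Type} [Semiring F] {n : ℕ} (c : Fin n → F) : Polynomial F :=
  ∑ i : Fin n, Polynomial.C (c i) * Polynomial.X ^ (i : ℕ)

/-- The cyclic code of length `n` generated by `g(x)` (a divisor of `x^n - 1`). -/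
def codeOfGen (F : Type) [Field F] (n : ℕ) (g : Polynomial F) : Set (Fin n → F) :=
  {c | g ∣ vecPoly c}

/-- Ceiling division `⌈a / b⌉` on naturals. -/
def ceilDiv' (a b : ℕ) : ℕ := (a + b - 1) / b

/-- The code parameters meet the Singleton-like bound for `(r, δ)`-LRCs:
`d = n - k - (⌈k/r⌉ - 1)(δ - 1) + 1`. -/
def SingletonOpt (n k r δ d : ℕ) : Prop :=
  d = n - k - (ceilDiv' k r - 1) * (δ - 1) + 1

/-- Membership in a cyclic code, unfolded. -/
lemma mem_cyclicCode_iff {F : Type} [Field F] {n : ℕ} {Z : Set F} {c : Fin n → F} :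
    c ∈ cyclicCode F n Z ↔ ∀ β ∈ Z, ∑ i : Fin n, c i * β ^ (i : ℕ) = 0 := by
  constructor
  · intro h β hβ
    have := h β hβ
    simpa using this
  · intro h β hβ
    show ∑ i : Fin n, algebraMap F F (c i) * β ^ (i : ℕ) = 0
    simpa using h β hβ

/-- Geometric-series vectors whose "inverse" avoids `Z` lie in the cyclic code. -/
lemma geom_mem_cyclicCode {F : Type} [Field F] {n : ℕ} {Z : Set F}
    (hZ : Z ⊆ {x : F | x ^ n = 1}) (δ : F) (hδ : δ ^ n = 1)
    (hδZ : ∀ ζ ∈ Z, δ * ζ ≠ 1) :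
    (fun k : Fin n => δ ^ (k : ℕ)) ∈ cyclicCode F n Z := by
  rw [mem_cyclicCode_iff]
  intro ζ hζ
  have hζn : ζ ^ n = 1 := hZ hζ
  have h1 : (δ * ζ) ^ n = 1 := by rw [mul_pow, hδ, hζn, one_mul]
  have h2 : δ * ζ ≠ 1 := hδZ ζ hζ
  calc ∑ i : Fin n, δ ^ (i : ℕ) * ζ ^ (i : ℕ)
      = ∑ i ∈ Finset.range n, (δ * ζ) ^ i := by
        rw [Fin.sum_univ_eq_sum_range (fun i => δ ^ i * ζ ^ i)]
        exact Finset.sum_congr rfl fun i _ => (mul_pow δ ζ i).symm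
    _ = ((δ * ζ) ^ n - 1) / (δ * ζ - 1) := geom_sum_eq h2 n
    _ = 0 := by rw [h1, sub_self, zero_div]

/-- The number of multiples of `ℓ` below `n` is `n / ℓ`. -/
lemma card_multiples_fin {n ℓ : ℕ} (hl : ℓ ∣ n) (hl0 : 0 < ℓ)
    [DecidablePred fun k : Fin n => ℓ ∣ (k : ℕ)] :
    (Finset.univ.filter fun k : Fin n => ℓ ∣ (k : ℕ)).card = n / ℓ := by
  rw [← Fintype.card_fin (n / ℓ), ← Finset.card_univ]
  refine Finset.card_bij' (fun (k : Fin n) _ => (⟨(k : ℕ) / ℓ,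
      Nat.div_lt_div_of_lt_of_dvd hl k.isLt⟩ : Fin (n / ℓ)))
    (fun (j : Fin (n / ℓ)) _ => (⟨ℓ * (j : ℕ), by
      calc ℓ * (j : ℕ) < ℓ * (n / ℓ) := Nat.mul_lt_mul_of_pos_left j.isLt hl0
        _ = n := Nat.mul_div_cancel' hl⟩ : Fin n)) ?_ ?_ ?_ ?_
  · intro k _; exact Finset.mem_univ _
  · intro j _
    simp only [Finset.mem_filter, Finset.mem_univ, true_and]
    exact Dvd.intro _ rfl
  · intro k hk
    simp only [Finset.mem_filter, Finset.mem_univ, true_and] at hk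
    apply Fin.ext
    simp [Nat.mul_div_cancel' hk]
  · intro j _
    apply Fin.ext
    simp [Nat.mul_div_cancel_left _ hl0]

/-- if the defining set `Z` contains a coset of a subgroup of order `ℓ`
of the `n`-th roots of unity, and the complement `R_n \ Z` contains a consecutive set
of length `n/ℓ - 1`, then the dual code has minimum distance exactly `n/ℓ`. -/
theorem stmt3 (F : Type) [Field F] [Fintype F] (n ℓ : ℕ) (hn : 0 < n)
    (hdvd : n ∣ Fintype.card F - 1) (hl : ℓ ∣ n) (hl0 : 0 < ℓ)
    (α : F) (hα : IsPrimitiveRoot α n)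
    (Z : Set F) (hZ : Z ⊆ {x : F | x ^ n = 1})
    (γ : F) (hγ : γ ^ n = 1) (hcoset : ∀ i < ℓ, γ * (α ^ (n / ℓ)) ^ i ∈ Z)
    (β : F) (hβ : IsPrimitiveRoot β n) (i : ℕ)
    (hconsec : ∀ j < n / ℓ - 1, β ^ (i + j) ∉ Z) :
    IsMinDist (dualSet F n (cyclicCode F n Z : Set (Fin n → F))) (n / ℓ) := by
  classical
  -- basic facts about the characteristic
  set p := ringChar F with hpdef
  haveI : CharP F p := ringChar.charP F
  have hp : p.Prime := CharP.char_is_prime F p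
  have hpcard : p ∣ Fintype.card F :=
    (CharP.cast_eq_zero_iff F p (Fintype.card F)).mp (FiniteField.cast_card_eq_zero F)
  have hcard2 : 1 < Fintype.card F := Fintype.one_lt_card
  have hpn : ¬ p ∣ n := by
    intro hpn
    have h1 : p ∣ Fintype.card F - 1 := hpn.trans hdvd
    have h2 : p ∣ Fintype.card F - (Fintype.card F - 1) := Nat.dvd_sub hpcard h1
    rw [Nat.sub_sub_self hcard2.le] at h2
    exact hp.ne_one (Nat.dvd_one.mp h2)
  have hlF : (ℓ : F) ≠ 0 := by
    intro h
    exact hpn ((CharP.cast_eq_zero_iff F p ℓ).mp h |>.trans hl)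
  have hγ0 : γ ≠ 0 := by
    intro h; rw [h, zero_pow hn.ne'] at hγ; exact zero_ne_one hγ
  have hβ0 : β ≠ 0 := by
    intro h
    have := hβ.pow_eq_one
    rw [h, zero_pow hn.ne'] at this; exact zero_ne_one this
  -- the lower bound (BCH-type argument)
  have key : ∀ v ∈ dualSet F n (cyclicCode F n Z : Set (Fin n → F)), v ≠ 0 → n / ℓ ≤ wt v := by
    intro v hv hv0
    by_contra hlt
    push_neg at hlt
    set S : Finset (Fin n) := Finset.univ.filter (fun i => v i ≠ 0) with hSdef
    have hwtS : wt v = S.card := by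
      rw [wt, hSdef]
    obtain ⟨k₀, hk₀v⟩ : ∃ k, v k ≠ 0 := by
      by_contra h; push_neg at h; exact hv0 (funext fun k => h k)
    have hk₀S : k₀ ∈ S := by simp [hSdef, hk₀v]
    have hS1 : 1 ≤ S.card := Finset.card_pos.mpr ⟨k₀, hk₀S⟩
    set m := n / ℓ - 1 with hmdef
    have hm1 : 1 ≤ m := by omega
    have hSm : S.card ≤ m := by omega
    set b := β⁻¹ with hbdef
    have hb : IsPrimitiveRoot b n := hβ.inv
    have hb0 : b ≠ 0 := inv_ne_zero hβ0
    have hbij : Set.InjOn (fun k : Fin n => b ^ (k : ℕ)) S := by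
      intro k _ k' _ h
      exact Fin.ext (hb.pow_inj k.isLt k'.isLt h)
    -- vanishing conditions from the dual
    have hvan : ∀ j < m, ∑ k ∈ S, (v k * b ^ (i * (k : ℕ))) * (b ^ (k : ℕ)) ^ j = 0 := by
      intro j hj
      have hZj : β ^ (i + j) ∉ Z := hconsec j hj
      have hδn : (b ^ (i + j)) ^ n = 1 := by
        rw [hbdef, inv_pow, inv_pow, ← pow_mul, mul_comm (i+j) n, pow_mul, hβ.pow_eq_one,
          one_pow, inv_one]
      have hδZ : ∀ ζ ∈ Z, b ^ (i + j) * ζ ≠ 1 := by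
        intro ζ hζ hcon
        have : ζ = (b ^ (i + j))⁻¹ := eq_inv_of_mul_eq_one_left (by rw [mul_comm]; exact hcon)
        rw [hbdef, inv_pow, inv_inv] at this
        exact hZj (this ▸ hζ)
      have hc := geom_mem_cyclicCode hZ (b ^ (i + j)) hδn hδZ
      have hsum := hv _ hc
      calc ∑ k ∈ S, (v k * b ^ (i * (k : ℕ))) * (b ^ (k : ℕ)) ^ j
          = ∑ k : Fin n, v k * (b ^ (i + j)) ^ (k : ℕ) := by
            rw [Finset.sum_subset (Finset.subset_univ S)]
            · apply Finset.sum_congr rfl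
              intro k _
              have hexp : (b ^ (i + j)) ^ (k : ℕ) =
                  b ^ (i * (k : ℕ)) * (b ^ (k : ℕ)) ^ j := by
                rw [← pow_mul, ← pow_mul, ← pow_add]
                congr 1
                ring
              rw [hexp]
              ring
            · intro k _ hk
              have : v k = 0 := by
                by_contra h; exact hk (by simp [hSdef, h])
              simp [this]
        _ = 0 := hsum
    -- Lagrange interpolation to kill v k₀
    set h := Lagrange.basis S (fun k : Fin n => b ^ (k : ℕ)) k₀ with hhdef
    have hdeg : h.natDegree = S.card - 1 := Lagrange.natDegree_basis hbij hk₀S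
    have hdeg' : h.natDegree < m := by omega
    have hzero : v k₀ * b ^ (i * (k₀ : ℕ)) = 0 := by
      calc v k₀ * b ^ (i * (k₀ : ℕ))
          = ∑ k ∈ S, (v k * b ^ (i * (k : ℕ))) * h.eval (b ^ (k : ℕ)) := by
            rw [Finset.sum_eq_single k₀]
            · rw [show h.eval (b ^ (k₀ : ℕ)) = 1 from Lagrange.eval_basis_self hbij hk₀S,
                mul_one]
            · intro k hk hkne
              rw [show h.eval (b ^ (k : ℕ)) = 0 from
                Lagrange.eval_basis_of_ne (v := fun k : Fin n => b ^ (k : ℕ))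
                  (Ne.symm hkne) hk, mul_zero]
            · intro hcon; exact absurd hk₀S hcon
        _ = ∑ k ∈ S, ∑ j ∈ Finset.range m, (v k * b ^ (i * (k : ℕ))) *
              (h.coeff j * (b ^ (k : ℕ)) ^ j) := by
            apply Finset.sum_congr rfl
            intro k _
            rw [Polynomial.eval_eq_sum_range' hdeg' (b ^ (k : ℕ)), Finset.mul_sum]
        _ = ∑ j ∈ Finset.range m, h.coeff j *
              ∑ k ∈ S, (v k * b ^ (i * (k : ℕ))) * (b ^ (k : ℕ)) ^ j := by
            rw [Finset.sum_comm]
            apply Finset.sum_congr rfl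
            intro j _
            rw [Finset.mul_sum]
            apply Finset.sum_congr rfl
            intro k _; ring
        _ = 0 := by
            apply Finset.sum_eq_zero
            intro j hj
            rw [hvan j (Finset.mem_range.mp hj), mul_zero]
    rcases mul_eq_zero.mp hzero with h1 | h2
    · exact hk₀v h1
    · exact pow_ne_zero _ hb0 h2
  -- the weight-(n/ℓ) codeword in the dual
  set v : Fin n → F := fun k => if ℓ ∣ (k : ℕ) then γ ^ (k : ℕ) else 0 with hvdef
  have hζprim : IsPrimitiveRoot (α ^ (n / ℓ)) ℓ :=
    hα.pow hn (Nat.div_mul_cancel hl).symm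
  set ζ : F := α ^ (n / ℓ) with hζdef
  have hsum : ∀ k : ℕ, ∑ t ∈ Finset.range ℓ, ζ ^ (t * k) = if ℓ ∣ k then (ℓ : F) else 0 := by
    intro k
    by_cases hdk : ℓ ∣ k
    · rw [if_pos hdk]
      have hζk : ζ ^ k = 1 := (hζprim.pow_eq_one_iff_dvd k).mpr hdk
      calc ∑ t ∈ Finset.range ℓ, ζ ^ (t * k)
          = ∑ t ∈ Finset.range ℓ, (1 : F) := by
            apply Finset.sum_congr rfl
            intro t _
            rw [mul_comm, pow_mul, hζk, one_pow]
        _ = (ℓ : F) := by simp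
    · rw [if_neg hdk]
      have hr1 : ζ ^ k ≠ 1 := fun h => hdk ((hζprim.pow_eq_one_iff_dvd k).mp h)
      have hrl : (ζ ^ k) ^ ℓ = 1 := by
        rw [← pow_mul, mul_comm, pow_mul, hζprim.pow_eq_one, one_pow]
      calc ∑ t ∈ Finset.range ℓ, ζ ^ (t * k)
          = ∑ t ∈ Finset.range ℓ, (ζ ^ k) ^ t := by
            apply Finset.sum_congr rfl
            intro t _
            rw [mul_comm t k]
            exact pow_mul ζ k t
        _ = ((ζ ^ k) ^ ℓ - 1) / (ζ ^ k - 1) := geom_sum_eq hr1 ℓ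
        _ = 0 := by rw [hrl, sub_self, zero_div]
  have hdual : v ∈ dualSet F n (cyclicCode F n Z : Set (Fin n → F)) := by
    intro c hc
    rw [SetLike.mem_coe, mem_cyclicCode_iff] at hc
    have hkey : (ℓ : F) * ∑ k : Fin n, v k * c k = 0 := by
      calc (ℓ : F) * ∑ k : Fin n, v k * c k
          = ∑ k : Fin n, (∑ t ∈ Finset.range ℓ, ζ ^ (t * (k : ℕ))) * γ ^ (k : ℕ) * c k := by
            rw [Finset.mul_sum]
            apply Finset.sum_congr rfl
            intro k _
            rw [hsum (k : ℕ)]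
            simp only [hvdef]
            by_cases hdk : ℓ ∣ (k : ℕ)
            · rw [if_pos hdk, if_pos hdk]; ring
            · rw [if_neg hdk, if_neg hdk]; ring
        _ = ∑ k : Fin n, ∑ t ∈ Finset.range ℓ, c k * (γ * ζ ^ t) ^ (k : ℕ) := by
            apply Finset.sum_congr rfl
            intro k _
            rw [Finset.sum_mul, Finset.sum_mul]
            apply Finset.sum_congr rfl
            intro t _
            rw [mul_pow, ← pow_mul]
            ring
        _ = ∑ t ∈ Finset.range ℓ, ∑ k : Fin n, c k * (γ * ζ ^ t) ^ (k : ℕ) :=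
            Finset.sum_comm
        _ = 0 := by
            apply Finset.sum_eq_zero
            intro t ht
            have hmem : γ * ζ ^ t ∈ Z := hcoset t (Finset.mem_range.mp ht)
            exact hc _ hmem
    rcases mul_eq_zero.mp hkey with h1 | h2
    · exact absurd h1 hlF
    · exact h2
  have hvne : v ≠ 0 := by
    intro h
    have h0 : v ⟨0, hn⟩ = 0 := by rw [h]; rfl
    rw [hvdef] at h0
    simp at h0
  have hwt : wt v = n / ℓ := by
    rw [wt]
    have hfe : (Finset.univ.filter fun k : Fin n => v k ≠ 0) =
        (Finset.univ.filter fun k : Fin n => ℓ ∣ (k : ℕ)) := by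
      apply Finset.filter_congr
      intro k _
      rw [hvdef]
      by_cases hdk : ℓ ∣ (k : ℕ)
      · simp only [if_pos hdk, hdk, iff_true]
        exact pow_ne_zero _ hγ0
      · simp [if_neg hdk, hdk]
    rw [hfe, card_multiples_fin hl hl0]
  exact ⟨⟨v, hdual, hvne, hwt⟩, key⟩
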